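/- Let I be an open interval containing 0, let X = (X₁,…,Xₙ) and Y = (Y₁,…,Yₙ) be vectors of independent I-valued random variables with E[Xᵢ] = E[Yᵢ] and E[Xᵢ²] = E[Yᵢ²] for each i, with X and Y independent of each other, and suppose γ := max{E|Xᵢ|³, E|Yᵢ|³ : 1 ≤ i ≤ n} < ∞. Let f : Iⁿ → ℝ be thrice differentiable in each coordinate, U = f(X), V = f(Y). Then for every thrice differentiable g : ℝ → ℝ with bounded first three derivatives, |E g(U) − E g(V)| ≤ 2 C₂(g) γ n λ₃(f). -/

import Mathlib

open MeasureTheory ProbabilityTheory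

/-- The `p`-fold partial derivative of `f` in the `i`-th coordinate, at `x`. -/
noncomputable def pderiv (n : ℕ) (f : (Fin n → ℝ) → ℝ) (i : Fin n) (p : ℕ)
    (x : Fin n → ℝ) : ℝ :=
  iteratedDeriv p (fun t => f (Function.update x i t)) (x i)

/-- `f` is thrice differentiable in each coordinate on `Iⁿ`. -/
def CoordDiff3 (n : ℕ) (I : Set ℝ) (f : (Fin n → ℝ) → ℝ) : Prop :=
  ∀ (i : Fin n) (x : Fin n → ℝ), (∀ j, x j ∈ I) →
    ∀ p < 3, DifferentiableOn ℝ
      (iteratedDeriv p fun t => f (Function.update x i t)) I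

/-- The set whose supremum is `λ_r(f)`. -/
def lamSet (n : ℕ) (I : Set ℝ) (f : (Fin n → ℝ) → ℝ) (r : ℕ) : Set ℝ :=
  { y | ∃ (i : Fin n) (p : ℕ) (x : Fin n → ℝ),
      1 ≤ p ∧ p ≤ r ∧ (∀ j, x j ∈ I) ∧
      y = |pderiv n f i p x| ^ ((r : ℝ) / (p : ℝ)) }

/-- `λ_r(f) = sup { |∂ᵢᵖ f(x)|^{r/p} : 1 ≤ i ≤ n, 1 ≤ p ≤ r, x ∈ Iⁿ }`. -/
noncomputable def lam (n : ℕ) (I : Set ℝ) (f : (Fin n → ℝ) → ℝ) (r : ℕ) : ℝ :=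
  sSup (lamSet n I f r)

open Set Filter Topology
open scoped ENNReal NNReal

section AuxLemmas
variable {n : ℕ} {I : Set ℝ} {f : (Fin n → ℝ) → ℝ}

lemma lamSet_bound (hbdd3 : BddAbove (lamSet n I f 3)) {i : Fin n} {p : ℕ}
    (h1 : 1 ≤ p) (h3 : p ≤ 3) {x : Fin n → ℝ} (hx : ∀ j, x j ∈ I) :
    |pderiv n f i p x| ≤ lam n I f 3 ^ ((p : ℝ) / 3) := by
  have hp0 : (0:ℝ) < (p:ℝ) := by exact_mod_cast h1
  have hmem : |pderiv n f i p x| ^ (((3:ℕ) : ℝ) / (p : ℝ)) ∈ lamSet n I f 3 :=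
    ⟨i, p, x, h1, h3, hx, rfl⟩
  have hle := le_csSup hbdd3 hmem
  have key : |pderiv n f i p x|
      = (|pderiv n f i p x| ^ (((3:ℕ):ℝ) / (p:ℝ))) ^ ((p:ℝ) / 3) := by
    rw [← Real.rpow_mul (abs_nonneg _)]
    rw [show (((3:ℕ):ℝ) / (p:ℝ)) * ((p:ℝ) / 3) = 1 by
      push_cast; field_simp]
    rw [Real.rpow_one]
  rw [key]
  exact Real.rpow_le_rpow (Real.rpow_nonneg (abs_nonneg _) _) hle (by positivity)

lemma lam3_nonneg (hbdd3 : BddAbove (lamSet n I f 3)) (i : Fin n)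
    {x : Fin n → ℝ} (hx : ∀ j, x j ∈ I) : 0 ≤ lam n I f 3 :=
  le_trans (Real.rpow_nonneg (abs_nonneg _) _)
    (le_csSup hbdd3 ⟨i, 1, x, le_refl 1, by norm_num, hx, rfl⟩)

/-- Facts about the one-variable slice `F t = f (update x i t)`. -/
lemma F_facts (hf : CoordDiff3 n I f) (hbdd3 : BddAbove (lamSet n I f 3))
    {x : Fin n → ℝ} (hx : ∀ j, x j ∈ I) (i : Fin n) :
    DifferentiableOn ℝ (fun t => f (Function.update x i t)) I ∧
    DifferentiableOn ℝ (deriv (fun t => f (Function.update x i t))) I ∧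
    DifferentiableOn ℝ (deriv (deriv (fun t => f (Function.update x i t)))) I ∧
    (∀ t ∈ I, |deriv (fun t => f (Function.update x i t)) t|
        ≤ lam n I f 3 ^ ((1:ℝ)/3)) ∧
    (∀ t ∈ I, |deriv (deriv (fun t => f (Function.update x i t))) t|
        ≤ lam n I f 3 ^ ((2:ℝ)/3)) ∧
    (∀ t ∈ I, |deriv (deriv (deriv (fun t => f (Function.update x i t)))) t|
        ≤ lam n I f 3) := by
  set F : ℝ → ℝ := fun t => f (Function.update x i t) with hF
  have h0 : DifferentiableOn ℝ F I := by
    have := hf i x hx 0 (by norm_num); rwa [iteratedDeriv_zero] at this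
  have h1 : DifferentiableOn ℝ (deriv F) I := by
    have := hf i x hx 1 (by norm_num); rwa [iteratedDeriv_one] at this
  have h2 : DifferentiableOn ℝ (deriv (deriv F)) I := by
    have := hf i x hx 2 (by norm_num)
    rwa [show (2:ℕ) = 1 + 1 from rfl, iteratedDeriv_succ, iteratedDeriv_one] at this
  have hpd : ∀ p, 1 ≤ p → p ≤ 3 → ∀ t ∈ I,
      iteratedDeriv p F t = pderiv n f i p (Function.update x i t) := by
    intro p _ _ t _
    unfold pderiv
    rw [Function.update_self]
    congr 1
    funext s
    rw [Function.update_idem]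
  have hbd : ∀ p, 1 ≤ p → p ≤ 3 → ∀ t ∈ I,
      |iteratedDeriv p F t| ≤ lam n I f 3 ^ ((p:ℝ)/3) := by
    intro p hp1 hp3 t ht
    rw [hpd p hp1 hp3 t ht]
    exact lamSet_bound hbdd3 hp1 hp3 (fun j => by
      rcases eq_or_ne j i with rfl | hj
      · rw [Function.update_self]; exact ht
      · rw [Function.update_of_ne hj]; exact hx j)
  refine ⟨h0, h1, h2, ?_, ?_, ?_⟩
  · intro t ht
    have := hbd 1 le_rfl (by norm_num) t ht
    rw [iteratedDeriv_one] at this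
    simpa using this
  · intro t ht
    have := hbd 2 (by norm_num) (by norm_num) t ht
    rw [iteratedDeriv_eq_iterate] at this
    simpa [Function.iterate_succ] using this
  · intro t ht
    have := hbd 3 (by norm_num) (by norm_num) t ht
    rw [iteratedDeriv_eq_iterate] at this
    simpa [Function.iterate_succ] using this
/-- Derivative facts for `h = g ∘ F`. -/
lemma comp_facts (hIopen : IsOpen I) (hf : CoordDiff3 n I f)
    (hbdd3 : BddAbove (lamSet n I f 3))
    {g : ℝ → ℝ} (hg : ∀ p < 3, Differentiable ℝ (iteratedDeriv p g))
    {B1 B2 B3 : ℝ} (hB1 : ∀ t, |deriv g t| ≤ B1) (hB2 : ∀ t, |iteratedDeriv 2 g t| ≤ B2)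
    (hB3 : ∀ t, |iteratedDeriv 3 g t| ≤ B3)
    {x : Fin n → ℝ} (hx : ∀ j, x j ∈ I) (i : Fin n) :
    DifferentiableOn ℝ (fun t => g (f (Function.update x i t))) I ∧
    DifferentiableOn ℝ (deriv (fun t => g (f (Function.update x i t)))) I ∧
    DifferentiableOn ℝ (deriv (deriv (fun t => g (f (Function.update x i t))))) I ∧
    (∀ t ∈ I, |deriv (fun t => g (f (Function.update x i t))) t|
        ≤ B1 * lam n I f 3 ^ ((1:ℝ)/3)) ∧
    (∀ t ∈ I, |deriv (deriv (fun t => g (f (Function.update x i t)))) t|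
        ≤ (B1 + B2) * lam n I f 3 ^ ((2:ℝ)/3)) ∧
    (∀ t ∈ I, |deriv (deriv (deriv (fun t => g (f (Function.update x i t))))) t|
        ≤ (B1 + 3*B2 + B3) * lam n I f 3) := by
  obtain ⟨hF0, hF1, hF2, hFb1, hFb2, hFb3⟩ := F_facts hf hbdd3 hx i
  set F : ℝ → ℝ := fun t => f (Function.update x i t) with hFdef
  set Λ : ℝ := lam n I f 3 with hΛdef
  have hΛ0 : 0 ≤ Λ := lam3_nonneg hbdd3 i hx
  have hg0 : Differentiable ℝ g := by
    have := hg 0 (by norm_num); rwa [iteratedDeriv_zero] at this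
  have hg1 : Differentiable ℝ (deriv g) := by
    have := hg 1 (by norm_num); rwa [iteratedDeriv_one] at this
  have hg2 : Differentiable ℝ (iteratedDeriv 2 g) := hg 2 (by norm_num)
  have hgd2 : ∀ u, HasDerivAt (deriv g) (iteratedDeriv 2 g u) u := by
    intro u
    have := (hg1 u).hasDerivAt
    rwa [show iteratedDeriv 2 g u = deriv (deriv g) u by
      rw [show (2:ℕ) = 1 + 1 from rfl, iteratedDeriv_succ, iteratedDeriv_one]]
  have hgd3 : ∀ u, HasDerivAt (iteratedDeriv 2 g) (iteratedDeriv 3 g u) u := by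
    intro u
    have := (hg2 u).hasDerivAt
    rwa [show iteratedDeriv 3 g u = deriv (iteratedDeriv 2 g) u by
      rw [show (3:ℕ) = 2 + 1 from rfl, iteratedDeriv_succ]]
  have hFt : ∀ t ∈ I, HasDerivAt F (deriv F t) t := fun t ht =>
    (hF0.differentiableAt (hIopen.mem_nhds ht)).hasDerivAt
  have hF1t : ∀ t ∈ I, HasDerivAt (deriv F) (deriv (deriv F) t) t := fun t ht =>
    (hF1.differentiableAt (hIopen.mem_nhds ht)).hasDerivAt
  have hF2t : ∀ t ∈ I, HasDerivAt (deriv (deriv F)) (deriv (deriv (deriv F)) t) t :=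
    fun t ht => (hF2.differentiableAt (hIopen.mem_nhds ht)).hasDerivAt
  -- first derivative
  have hht : ∀ t ∈ I, HasDerivAt (fun t => g (F t)) (deriv g (F t) * deriv F t) t :=
    fun t ht => ((hg0 (F t)).hasDerivAt).comp t (hFt t ht)
  have ed1 : ∀ t ∈ I, deriv (fun t => g (F t)) t = deriv g (F t) * deriv F t :=
    fun t ht => (hht t ht).deriv
  have D1 : DifferentiableOn ℝ (fun t => g (F t)) I :=
    fun t ht => (hht t ht).differentiableAt.differentiableWithinAt
  -- second derivative
  have hφ1 : ∀ t ∈ I, HasDerivAt (fun s => deriv g (F s) * deriv F s)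
      ((iteratedDeriv 2 g (F t) * deriv F t) * deriv F t
        + deriv g (F t) * deriv (deriv F) t) t :=
    fun t ht => (((hgd2 (F t)).comp t (hFt t ht)).mul (hF1t t ht))
  have hd2 : ∀ t ∈ I, HasDerivAt (deriv (fun t => g (F t)))
      ((iteratedDeriv 2 g (F t) * deriv F t) * deriv F t
        + deriv g (F t) * deriv (deriv F) t) t := by
    intro t ht
    refine (hφ1 t ht).congr_of_eventuallyEq ?_
    exact Filter.eventuallyEq_of_mem (hIopen.mem_nhds ht) ed1
  have ed2 : ∀ t ∈ I, deriv (deriv (fun t => g (F t))) t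
      = (iteratedDeriv 2 g (F t) * deriv F t) * deriv F t
        + deriv g (F t) * deriv (deriv F) t := fun t ht => (hd2 t ht).deriv
  have D2 : DifferentiableOn ℝ (deriv (fun t => g (F t))) I :=
    fun t ht => (hd2 t ht).differentiableAt.differentiableWithinAt
  -- third derivative
  have hφ2 : ∀ t ∈ I, HasDerivAt
      (fun s => (iteratedDeriv 2 g (F s) * deriv F s) * deriv F s
        + deriv g (F s) * deriv (deriv F) s)
      ((((iteratedDeriv 3 g (F t) * deriv F t) * deriv F t
          + iteratedDeriv 2 g (F t) * deriv (deriv F) t) * deriv F t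
        + (iteratedDeriv 2 g (F t) * deriv F t) * deriv (deriv F) t)
        + ((iteratedDeriv 2 g (F t) * deriv F t) * deriv (deriv F) t
          + deriv g (F t) * deriv (deriv (deriv F)) t)) t := by
    intro t ht
    exact ((((hgd3 (F t)).comp t (hFt t ht)).mul (hF1t t ht)).mul (hF1t t ht)).add
      (((hgd2 (F t)).comp t (hFt t ht)).mul (hF2t t ht))
  have hd3 : ∀ t ∈ I, HasDerivAt (deriv (deriv (fun t => g (F t))))
      ((((iteratedDeriv 3 g (F t) * deriv F t) * deriv F t
          + iteratedDeriv 2 g (F t) * deriv (deriv F) t) * deriv F t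
        + (iteratedDeriv 2 g (F t) * deriv F t) * deriv (deriv F) t)
        + ((iteratedDeriv 2 g (F t) * deriv F t) * deriv (deriv F) t
          + deriv g (F t) * deriv (deriv (deriv F)) t)) t := by
    intro t ht
    refine (hφ2 t ht).congr_of_eventuallyEq ?_
    exact Filter.eventuallyEq_of_mem (hIopen.mem_nhds ht) ed2
  have ed3 : ∀ t ∈ I, deriv (deriv (deriv (fun t => g (F t)))) t
      = (((iteratedDeriv 3 g (F t) * deriv F t) * deriv F t
          + iteratedDeriv 2 g (F t) * deriv (deriv F) t) * deriv F t
        + (iteratedDeriv 2 g (F t) * deriv F t) * deriv (deriv F) t)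
        + ((iteratedDeriv 2 g (F t) * deriv F t) * deriv (deriv F) t
          + deriv g (F t) * deriv (deriv (deriv F)) t) := fun t ht => (hd3 t ht).deriv
  have D3 : DifferentiableOn ℝ (deriv (deriv (fun t => g (F t)))) I :=
    fun t ht => (hd3 t ht).differentiableAt.differentiableWithinAt
  -- bounds
  have hB1n : 0 ≤ B1 := le_trans (abs_nonneg _) (hB1 0)
  have hB2n : 0 ≤ B2 := le_trans (abs_nonneg _) (hB2 0)
  have hB3n : 0 ≤ B3 := le_trans (abs_nonneg _) (hB3 0)
  have hu0 : 0 ≤ Λ ^ ((1:ℝ)/3) := Real.rpow_nonneg hΛ0 _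
  have hv0 : 0 ≤ Λ ^ ((2:ℝ)/3) := Real.rpow_nonneg hΛ0 _
  have huu : Λ ^ ((1:ℝ)/3) * Λ ^ ((1:ℝ)/3) = Λ ^ ((2:ℝ)/3) := by
    rw [← Real.rpow_add_of_nonneg hΛ0 (by norm_num) (by norm_num)]; norm_num
  have huv : Λ ^ ((1:ℝ)/3) * Λ ^ ((2:ℝ)/3) = Λ := by
    rw [← Real.rpow_add_of_nonneg hΛ0 (by norm_num) (by norm_num)]; norm_num
  refine ⟨D1, D2, D3, ?_, ?_, ?_⟩
  · intro t ht
    rw [ed1 t ht, abs_mul]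
    exact mul_le_mul (hB1 _) (hFb1 t ht) (abs_nonneg _) hB1n
  · intro t ht
    rw [ed2 t ht]
    have e1 : |(iteratedDeriv 2 g (F t) * deriv F t) * deriv F t|
        ≤ B2 * Λ ^ ((2:ℝ)/3) := by
      rw [abs_mul, abs_mul, ← huu, ← mul_assoc]
      exact mul_le_mul (mul_le_mul (hB2 _) (hFb1 t ht) (abs_nonneg _) hB2n)
        (hFb1 t ht) (abs_nonneg _) (by positivity)
    have e2 : |deriv g (F t) * deriv (deriv F) t| ≤ B1 * Λ ^ ((2:ℝ)/3) := by
      rw [abs_mul]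
      exact mul_le_mul (hB1 _) (hFb2 t ht) (abs_nonneg _) hB1n
    calc |(iteratedDeriv 2 g (F t) * deriv F t) * deriv F t
        + deriv g (F t) * deriv (deriv F) t| ≤ _ + _ := abs_add_le _ _
      _ ≤ B2 * Λ ^ ((2:ℝ)/3) + B1 * Λ ^ ((2:ℝ)/3) := add_le_add e1 e2
      _ = (B1 + B2) * Λ ^ ((2:ℝ)/3) := by ring
  · intro t ht
    rw [ed3 t ht]
    have e1 : |(iteratedDeriv 3 g (F t) * deriv F t) * deriv F t| ≤ B3 * Λ ^ ((2:ℝ)/3) := by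
      rw [abs_mul, abs_mul, ← huu, ← mul_assoc]
      exact mul_le_mul (mul_le_mul (hB3 _) (hFb1 t ht) (abs_nonneg _) hB3n)
        (hFb1 t ht) (abs_nonneg _) (by positivity)
    have e2 : |iteratedDeriv 2 g (F t) * deriv (deriv F) t| ≤ B2 * Λ ^ ((2:ℝ)/3) := by
      rw [abs_mul]
      exact mul_le_mul (hB2 _) (hFb2 t ht) (abs_nonneg _) hB2n
    have e3 : |((iteratedDeriv 3 g (F t) * deriv F t) * deriv F t
        + iteratedDeriv 2 g (F t) * deriv (deriv F) t) * deriv F t|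
        ≤ (B3 + B2) * Λ := by
      rw [abs_mul]
      calc |(iteratedDeriv 3 g (F t) * deriv F t) * deriv F t
          + iteratedDeriv 2 g (F t) * deriv (deriv F) t| * |deriv F t|
          ≤ ((B3 + B2) * Λ ^ ((2:ℝ)/3)) * Λ ^ ((1:ℝ)/3) := by
            refine mul_le_mul ?_ (hFb1 t ht) (abs_nonneg _) (by positivity)
            calc _ ≤ _ + _ := abs_add_le _ _
              _ ≤ B3 * Λ ^ ((2:ℝ)/3) + B2 * Λ ^ ((2:ℝ)/3) := add_le_add e1 e2
              _ = (B3 + B2) * Λ ^ ((2:ℝ)/3) := by ring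
        _ = (B3 + B2) * Λ := by rw [mul_assoc, mul_comm (Λ ^ ((2:ℝ)/3)), huv]
    have e4 : |(iteratedDeriv 2 g (F t) * deriv F t) * deriv (deriv F) t| ≤ B2 * Λ := by
      rw [abs_mul, abs_mul, mul_assoc]
      refine mul_le_mul (hB2 _) ?_ (by positivity) hB2n
      calc |deriv F t| * |deriv (deriv F) t| ≤ Λ ^ ((1:ℝ)/3) * Λ ^ ((2:ℝ)/3) :=
          mul_le_mul (hFb1 t ht) (hFb2 t ht) (abs_nonneg _) hu0
        _ = Λ := huv
    have e5 : |deriv g (F t) * deriv (deriv (deriv F)) t| ≤ B1 * Λ := by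
      rw [abs_mul]
      exact mul_le_mul (hB1 _) (hFb3 t ht) (abs_nonneg _) hB1n
    calc _ ≤ |(((iteratedDeriv 3 g (F t) * deriv F t) * deriv F t
          + iteratedDeriv 2 g (F t) * deriv (deriv F) t) * deriv F t
        + (iteratedDeriv 2 g (F t) * deriv F t) * deriv (deriv F) t)|
        + |((iteratedDeriv 2 g (F t) * deriv F t) * deriv (deriv F) t
          + deriv g (F t) * deriv (deriv (deriv F)) t)| := abs_add_le _ _
      _ ≤ ((B3 + B2) * Λ + B2 * Λ) + (B2 * Λ + B1 * Λ) :=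
        add_le_add (le_trans (abs_add_le _ _) (add_le_add e3 e4))
          (le_trans (abs_add_le _ _) (add_le_add e4 e5))
      _ = (B1 + 3*B2 + B3) * Λ := by ring
end AuxLemmas

lemma iterDW_eq_of_smooth {s : Set ℝ} (hs : IsOpen s) {h : ℝ → ℝ}
    (hd0 : DifferentiableOn ℝ h s) (hd1 : DifferentiableOn ℝ (deriv h) s)
    {a b : ℝ} (hab : a < b) (hsub : Icc a b ⊆ s) :
    (∀ u ∈ Icc a b, iteratedDerivWithin 1 h (Icc a b) u = deriv h u) ∧
    (∀ u ∈ Icc a b, iteratedDerivWithin 2 h (Icc a b) u = deriv (deriv h) u) := by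
  have hud := uniqueDiffOn_Icc hab
  have h1 : ∀ u ∈ Icc a b, iteratedDerivWithin 1 h (Icc a b) u = deriv h u := by
    intro u hu
    rw [iteratedDerivWithin_one]
    exact (hd0.differentiableAt (hs.mem_nhds (hsub hu))).derivWithin (hud u hu)
  refine ⟨h1, fun u hu => ?_⟩
  rw [show (2:ℕ) = 1 + 1 from rfl, iteratedDerivWithin_succ,
    derivWithin_congr h1 (h1 u hu)]
  exact (hd1.differentiableAt (hs.mem_nhds (hsub hu))).derivWithin (hud u hu)

lemma contDiffOn_two_of_derivs {s : Set ℝ} (hs : IsOpen s) {h : ℝ → ℝ}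
    (hd0 : DifferentiableOn ℝ h s) (hd1 : DifferentiableOn ℝ (deriv h) s)
    (hd2 : DifferentiableOn ℝ (deriv (deriv h)) s) : ContDiffOn ℝ 2 h s := by
  rw [show (2 : WithTop ℕ∞) = 1 + 1 by norm_num, contDiffOn_succ_iff_deriv_of_isOpen hs]
  refine ⟨hd0, by simp, ?_⟩
  rw [show (1 : WithTop ℕ∞) = 0 + 1 by norm_num, contDiffOn_succ_iff_deriv_of_isOpen hs]
  exact ⟨hd1, by simp, by rw [contDiffOn_zero]; exact hd2.continuousOn⟩

lemma taylor3_bound_pos {s : Set ℝ} (hs : IsOpen s) (hconv : Convex ℝ s) (h0 : (0:ℝ) ∈ s)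
    {h : ℝ → ℝ} (hd0 : DifferentiableOn ℝ h s) (hd1 : DifferentiableOn ℝ (deriv h) s)
    (hd2 : DifferentiableOn ℝ (deriv (deriv h)) s) {M t : ℝ}
    (hM : ∀ u ∈ s, |deriv (deriv (deriv h)) u| ≤ M) (ht : t ∈ s) (h0t : 0 < t) :
    |h t - h 0 - deriv h 0 * t - deriv (deriv h) 0 * t ^ 2 / 2| ≤ M * |t| ^ 3 / 6 := by
  have hsub : Icc 0 t ⊆ s := hconv.ordConnected.out h0 ht
  obtain ⟨e1, e2⟩ := iterDW_eq_of_smooth hs hd0 hd1 h0t hsub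
  have hud := uniqueDiffOn_Icc h0t
  have hcd : ContDiffOn ℝ 2 h (Icc 0 t) :=
    (contDiffOn_two_of_derivs hs hd0 hd1 hd2).mono hsub
  have hcd' : ContDiffOn ℝ ((2:ℕ) : WithTop ℕ∞) h (Icc 0 t) := by exact_mod_cast hcd
  have hdiff : DifferentiableOn ℝ (iteratedDerivWithin 2 h (Icc 0 t)) (Ioo 0 t) := by
    refine (hd2.mono (subset_trans Ioo_subset_Icc_self hsub)).congr ?_
    intro u hu; exact e2 u (Ioo_subset_Icc_self hu)
  obtain ⟨x', hx', heq⟩ := taylor_mean_remainder_lagrange (ne_of_lt h0t)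
    (by rwa [uIcc_of_le h0t.le]) (by rwa [uIcc_of_le h0t.le, uIoo_of_le h0t.le])
  rw [uIcc_of_le h0t.le] at heq
  rw [uIoo_of_le h0t.le] at hx'
  have hIccx' : x' ∈ Icc 0 t := Ioo_subset_Icc_self hx'
  have h3 : iteratedDerivWithin 3 h (Icc 0 t) x' = deriv (deriv (deriv h)) x' := by
    rw [show (3:ℕ) = 2 + 1 from rfl, iteratedDerivWithin_succ,
      derivWithin_congr e2 (e2 x' hIccx')]
    exact (hd2.differentiableAt (hs.mem_nhds (hsub hIccx'))).derivWithin (hud x' hIccx')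
  have htay : taylorWithinEval h 2 (Icc 0 t) 0 t
      = h 0 + deriv h 0 * t + deriv (deriv h) 0 * t ^ 2 / 2 := by
    rw [taylor_within_apply]
    rw [Finset.sum_range_succ, Finset.sum_range_succ, Finset.sum_range_one]
    have l0 : iteratedDerivWithin 0 h (Icc 0 t) 0 = h 0 := by simp
    have l1 := e1 0 (left_mem_Icc.mpr h0t.le)
    have l2 := e2 0 (left_mem_Icc.mpr h0t.le)
    rw [l0, l1, l2]
    simp [Nat.factorial]
    ring
  have key : h t - h 0 - deriv h 0 * t - deriv (deriv h) 0 * t ^ 2 / 2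
      = deriv (deriv (deriv h)) x' * t ^ 3 / 6 := by
    rw [htay, h3] at heq
    norm_num [Nat.factorial] at heq
    linarith [heq]
  rw [key]
  rw [abs_div, abs_mul]
  have habs : |t ^ 3| = |t| ^ 3 := abs_pow t 3
  rw [habs]
  have : |deriv (deriv (deriv h)) x'| ≤ M := hM x' (hsub hIccx')
  have h6 : |(6:ℝ)| = 6 := by norm_num
  rw [h6]
  apply div_le_div_of_nonneg_right ?_ (by norm_num)
  · exact mul_le_mul_of_nonneg_right this (by positivity)

lemma taylor3_bound {s : Set ℝ} (hs : IsOpen s) (hconv : Convex ℝ s) (h0 : (0:ℝ) ∈ s)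
    {h : ℝ → ℝ} (hd0 : DifferentiableOn ℝ h s) (hd1 : DifferentiableOn ℝ (deriv h) s)
    (hd2 : DifferentiableOn ℝ (deriv (deriv h)) s) {M t : ℝ}
    (hM : ∀ u ∈ s, |deriv (deriv (deriv h)) u| ≤ M) (ht : t ∈ s) :
    |h t - h 0 - deriv h 0 * t - deriv (deriv h) 0 * t ^ 2 / 2| ≤ M * |t| ^ 3 / 6 := by
  rcases lt_trichotomy t 0 with hneg | rfl | hpos
  · -- reflection
    set k : ℝ → ℝ := fun u => h (-u) with hk
    have ek1 : deriv k = fun u => -deriv h (-u) := by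
      funext u; exact deriv_comp_neg h u
    have ek2 : deriv (deriv k) = fun u => deriv (deriv h) (-u) := by
      funext u
      rw [ek1]
      have e : deriv (fun u : ℝ => -deriv h (-u)) u
          = -deriv (fun u : ℝ => deriv h (-u)) u := deriv.neg
      rw [e, deriv_comp_neg (deriv h) u, neg_neg]
    have ek3 : deriv (deriv (deriv k)) = fun u => -deriv (deriv (deriv h)) (-u) := by
      funext u
      rw [ek2]
      exact deriv_comp_neg (deriv (deriv h)) u
    have hnegs : Convex ℝ (-s) := hconv.neg
    have hnego : IsOpen (-s) := hs.neg
    have hmem : ∀ {u : ℝ}, u ∈ (-s : Set ℝ) ↔ -u ∈ s := fun {u} => Set.mem_neg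
    have hmaps : Set.MapsTo (fun u : ℝ => -u) (-s) s := fun u hu => hmem.mp hu
    have kd0 : DifferentiableOn ℝ k (-s) :=
      hd0.comp (differentiable_neg.differentiableOn) hmaps
    have kd1 : DifferentiableOn ℝ (deriv k) (-s) := by
      rw [ek1]
      exact ((hd1.comp (differentiable_neg.differentiableOn) hmaps)).neg
    have kd2 : DifferentiableOn ℝ (deriv (deriv k)) (-s) := by
      rw [ek2]
      exact hd2.comp (differentiable_neg.differentiableOn) hmaps
    have kM : ∀ u ∈ (-s : Set ℝ), |deriv (deriv (deriv k)) u| ≤ M := by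
      intro u hu
      rw [ek3, abs_neg]
      exact hM _ (hmem.mp hu)
    have h0' : (0:ℝ) ∈ (-s : Set ℝ) := by rw [hmem, neg_zero]; exact h0
    have ht' : -t ∈ (-s : Set ℝ) := by rw [hmem, neg_neg]; exact ht
    have := taylor3_bound_pos hnego hnegs h0' kd0 kd1 kd2 kM ht' (by linarith)
    have ekk : k (-t) = h t := by simp [hk]
    have ek10 : deriv k 0 = -deriv h 0 := by rw [ek1]; simp
    have ek20 : deriv (deriv k) 0 = deriv (deriv h) 0 := by rw [ek2]; simp
    have ekk0 : k 0 = h 0 := by simp [hk]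
    rw [ekk, ek10, ek20, ekk0] at this
    have eabs : |-t| = |t| := abs_neg t
    rw [eabs] at this
    calc |h t - h 0 - deriv h 0 * t - deriv (deriv h) 0 * t ^ 2 / 2|
        = |h t - h 0 - -deriv h 0 * -t - deriv (deriv h) 0 * (-t) ^ 2 / 2| := by ring_nf
      _ ≤ M * |t| ^ 3 / 6 := this
  · simp
  · exact taylor3_bound_pos hs hconv h0 hd0 hd1 hd2 hM ht hpos

section AuxLemmas2
variable {n : ℕ} {I : Set ℝ} {f : (Fin n → ℝ) → ℝ}

/-- Single-coordinate Lipschitz bound. -/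
lemma f_coordLip (hIopen : IsOpen I) (hIconn : I.OrdConnected) (hf : CoordDiff3 n I f)
    (hbdd3 : BddAbove (lamSet n I f 3)) {z : Fin n → ℝ} (hz : ∀ j, z j ∈ I) (i : Fin n)
    {a b : ℝ} (ha : a ∈ I) (hb : b ∈ I) :
    |f (Function.update z i a) - f (Function.update z i b)|
      ≤ lam n I f 3 ^ ((1:ℝ)/3) * |a - b| := by
  obtain ⟨hF0, _, _, hFb1, _, _⟩ := F_facts hf hbdd3 hz i
  have hconv : Convex ℝ I := convex_iff_ordConnected.mpr hIconn
  have := Convex.norm_image_sub_le_of_norm_deriv_le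
    (fun u hu => hF0.differentiableAt (hIopen.mem_nhds hu))
    (fun u hu => by rw [Real.norm_eq_abs]; exact hFb1 u hu) hconv hb ha
  simpa [Real.norm_eq_abs] using this

/-- Multi-coordinate Lipschitz bound (ℓ¹). -/
lemma f_multiLip (hIopen : IsOpen I) (hIconn : I.OrdConnected) (hf : CoordDiff3 n I f)
    (hbdd3 : BddAbove (lamSet n I f 3)) {v w : Fin n → ℝ}
    (hv : ∀ j, v j ∈ I) (hw : ∀ j, w j ∈ I) :
    |f v - f w| ≤ lam n I f 3 ^ ((1:ℝ)/3) * ∑ j, |v j - w j| := by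
  set L : ℝ := lam n I f 3 ^ ((1:ℝ)/3) with hL
  set z : ℕ → (Fin n → ℝ) := fun m j => if (j : ℕ) < m then v j else w j with hzdef
  have hzI : ∀ m j, z m j ∈ I := by
    intro m j; by_cases hj : (j:ℕ) < m <;> simp [hzdef, hj] <;> [exact hv j; exact hw j]
  have hz0 : z 0 = w := by funext j; simp [hzdef]
  have hzn : z n = v := by funext j; simp [hzdef, j.isLt]
  set D : ℕ → ℝ := fun m => if h : m < n then |v ⟨m, h⟩ - w ⟨m, h⟩| else 0 with hDdef
  have hstep : ∀ m < n, |f (z (m + 1)) - f (z m)| ≤ L * D m := by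
    intro m hm
    have e1 : z (m + 1) = Function.update (z m) ⟨m, hm⟩ (v ⟨m, hm⟩) := by
      funext j
      rcases eq_or_ne j ⟨m, hm⟩ with rfl | hj
      · simp [hzdef, Function.update_self]
      · have : (j : ℕ) ≠ m := fun hc => hj (Fin.ext hc)
        rw [Function.update_of_ne hj]
        simp only [hzdef]
        have : ((j:ℕ) < m + 1) ↔ ((j:ℕ) < m) := by omega
        rw [if_congr this rfl rfl]
    have e2 : z m = Function.update (z m) ⟨m, hm⟩ (w ⟨m, hm⟩) := by
      funext j
      rcases eq_or_ne j ⟨m, hm⟩ with rfl | hj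
      · simp [hzdef, Function.update_self]
      · rw [Function.update_of_ne hj]
    rw [e1]
    nth_rewrite 2 [e2]
    have hcl := f_coordLip hIopen hIconn hf hbdd3 (hzI m) ⟨m, hm⟩ (hv ⟨m, hm⟩) (hw ⟨m, hm⟩)
    rw [show D m = |v ⟨m, hm⟩ - w ⟨m, hm⟩| from by simp [hDdef, dif_pos hm]]
    exact hcl
  have htel : f v - f w = ∑ m ∈ Finset.range n, (f (z (m + 1)) - f (z m)) := by
    rw [Finset.sum_range_sub (fun m => f (z m)), hz0, hzn]
  have hsum : |f v - f w| ≤ ∑ m ∈ Finset.range n, (L * D m) := by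
    rw [htel]
    refine le_trans (Finset.abs_sum_le_sum_abs _ _) ?_
    exact Finset.sum_le_sum fun m hm => hstep m (Finset.mem_range.mp hm)
  rw [← Finset.mul_sum] at hsum
  refine hsum.trans (le_of_eq ?_)
  congr 1
  rw [← Fin.sum_univ_eq_sum_range D n]
  refine Finset.sum_congr rfl fun j _ => ?_
  simp [hDdef, j.isLt]

/-- `f` is continuous on `Iⁿ`. -/
lemma f_contOn (hIopen : IsOpen I) (hIconn : I.OrdConnected) (hf : CoordDiff3 n I f)
    (hbdd3 : BddAbove (lamSet n I f 3)) (hΛ0 : 0 ≤ lam n I f 3) :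
    ContinuousOn f {v : Fin n → ℝ | ∀ j, v j ∈ I} := by
  set L : ℝ := lam n I f 3 ^ ((1:ℝ)/3) with hL
  have hL0 : 0 ≤ L := Real.rpow_nonneg hΛ0 _
  have : LipschitzOnWith (L * n).toNNReal f {v : Fin n → ℝ | ∀ j, v j ∈ I} := by
    refine LipschitzOnWith.of_dist_le_mul fun v hv w hw => ?_
    rw [Real.dist_eq, Real.coe_toNNReal _ (by positivity)]
    refine (f_multiLip hIopen hIconn hf hbdd3 hv hw).trans ?_
    rw [mul_assoc]
    refine mul_le_mul_of_nonneg_left ?_ hL0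
    calc ∑ j, |v j - w j| ≤ ∑ _j : Fin n, dist v w := by
          refine Finset.sum_le_sum fun j _ => ?_
          rw [← Real.dist_eq]
          exact dist_le_pi_dist v w j
      _ = n * dist v w := by rw [Finset.sum_const, Finset.card_univ, Fintype.card_fin,
            nsmul_eq_mul]
  exact this.continuousOn

/-- Composition with a measurable map into `Iⁿ` is measurable. -/
lemma meas_comp {φ : (Fin n → ℝ) → ℝ}
    (hcont : ContinuousOn φ {v : Fin n → ℝ | ∀ j, v j ∈ I})
    {Ω : Type} {m0 : MeasurableSpace Ω} {S : Ω → Fin n → ℝ}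
    (hS : Measurable[m0] S) (hSI : ∀ ω j, S ω j ∈ I) :
    Measurable[m0] fun ω => φ (S ω) := by
  set U : Set (Fin n → ℝ) := {v | ∀ j, v j ∈ I} with hU
  have h1 : Continuous (U.restrict φ) := continuousOn_iff_continuous_restrict.mp hcont
  have h2 : Measurable[m0] (fun ω => (⟨S ω, hSI ω⟩ : U)) := hS.subtype_mk
  exact h1.measurable.comp h2

/-- Pointwise derivatives of measurable families are measurable. -/
lemma meas_deriv (hIopen : IsOpen I) {Ω : Type} {m0 : MeasurableSpace Ω}
    {H : Ω → ℝ → ℝ} {t : ℝ} (ht : t ∈ I)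
    (hmeas : ∀ u ∈ I, Measurable[m0] fun ω => H ω u)
    (hdiff : ∀ ω, DifferentiableAt ℝ (H ω) t) :
    Measurable[m0] fun ω => deriv (H ω) t := by
  obtain ⟨ε, hε, hball⟩ := Metric.isOpen_iff.mp hIopen t ht
  set seq : ℕ → ℝ := fun m => t + ε / (m + 2) with hseq
  have hpos : ∀ m : ℕ, 0 < ε / ((m : ℝ) + 2) := fun m => by positivity
  have hseqI : ∀ m, seq m ∈ I := by
    intro m
    apply hball
    rw [Metric.mem_ball, Real.dist_eq, hseq]
    have h2 : ε / ((m:ℝ) + 2) < ε := by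
      rw [div_lt_iff₀ (by positivity)]
      nlinarith [hε]
    rw [show t + ε / ((m:ℝ) + 2) - t = ε / ((m:ℝ) + 2) by ring, abs_of_pos (hpos m)]
    exact h2
  have hseqne : ∀ m, seq m ≠ t := fun m => by
    have := hpos m; simp only [hseq]; intro hc; nlinarith [hc]
  have hseqtend : Tendsto seq atTop (𝓝 t) := by
    have ha : Tendsto (fun m : ℕ => ε / ((m:ℝ) + 2)) atTop (𝓝 0) := by
      apply Tendsto.div_atTop tendsto_const_nhds
      exact tendsto_atTop_add_const_right _ 2 tendsto_natCast_atTop_atTop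
    simpa using tendsto_const_nhds.add ha
  have h2 : Tendsto seq atTop (𝓝[≠] t) :=
    tendsto_nhdsWithin_of_tendsto_nhds_of_eventually_within _ hseqtend
      (Filter.Eventually.of_forall fun m => hseqne m)
  have htend : ∀ ω, Tendsto (fun m => (H ω (seq m) - H ω t) / (seq m - t)) atTop
      (𝓝 (deriv (H ω) t)) := by
    intro ω
    have h1 := hasDerivAt_iff_tendsto_slope.mp (hdiff ω).hasDerivAt
    refine (h1.comp h2).congr fun m => ?_
    simp [slope_def_field]
  apply measurable_of_tendsto_metrizable
    (f := fun m ω => (H ω (seq m) - H ω t) / (seq m - t))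
  · intro m
    exact ((hmeas (seq m) (hseqI m)).sub (hmeas t ht)).div_const _
  · rw [tendsto_pi_nhds]; exact htend
end AuxLemmas2

theorem stmt1
    {Ω : Type} [MeasurableSpace Ω] {μ : Measure Ω} [IsProbabilityMeasure μ]
    {n : ℕ} {I : Set ℝ} (hIopen : IsOpen I) (hIconn : I.OrdConnected)
    (hI0 : (0 : ℝ) ∈ I)
    (X Y : Fin n → Ω → ℝ)
    (hXmeas : ∀ i, Measurable (X i)) (hYmeas : ∀ i, Measurable (Y i))
    (hXI : ∀ i ω, X i ω ∈ I) (hYI : ∀ i ω, Y i ω ∈ I)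
    (hindep : iIndepFun (Sum.elim X Y) μ)
    (hmean : ∀ i, ∫ ω, X i ω ∂μ = ∫ ω, Y i ω ∂μ)
    (hvar : ∀ i, ∫ ω, (X i ω) ^ 2 ∂μ = ∫ ω, (Y i ω) ^ 2 ∂μ)
    (γ : ℝ)
    (hX3 : ∀ i, MemLp (X i) 3 μ) (hY3 : ∀ i, MemLp (Y i) 3 μ)
    (hγX : ∀ i, ∫ ω, |X i ω| ^ 3 ∂μ ≤ γ) (hγY : ∀ i, ∫ ω, |Y i ω| ^ 3 ∂μ ≤ γ)
    (f : (Fin n → ℝ) → ℝ) (hf : CoordDiff3 n I f)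
    (hbdd2 : BddAbove (lamSet n I f 2)) (hbdd3 : BddAbove (lamSet n I f 3))
    (g : ℝ → ℝ) (hg : ∀ p < 3, Differentiable ℝ (iteratedDeriv p g))
    (B1 B2 B3 : ℝ)
    (hB1 : ∀ t, |deriv g t| ≤ B1)
    (hB2 : ∀ t, |iteratedDeriv 2 g t| ≤ B2)
    (hB3 : ∀ t, |iteratedDeriv 3 g t| ≤ B3) :
    |(∫ ω, g (f fun i => X i ω) ∂μ) - ∫ ω, g (f fun i => Y i ω) ∂μ| ≤
      2 * (B1 / 6 + B2 / 2 + B3 / 6) * γ * n * lam n I f 3 := by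
  rcases Nat.eq_zero_or_pos n with hn0 | hn
  · subst hn0
    have he : ∀ ω : Ω, (fun i : Fin 0 => X i ω) = (fun i => Y i ω) := by
      intro ω; funext i; exact i.elim0
    have heq : (∫ ω, g (f fun i => X i ω) ∂μ) = ∫ ω, g (f fun i => Y i ω) ∂μ := by
      refine integral_congr_ae (Filter.Eventually.of_forall fun ω => ?_)
      simp only [he ω]
    rw [heq, sub_self, abs_zero]
    simp
  -- main case
  have hconv : Convex ℝ I := convex_iff_ordConnected.mpr hIconn
  have hΛ0 : 0 ≤ lam n I f 3 := lam3_nonneg hbdd3 ⟨0, hn⟩ (x := fun _ => 0) (fun _ => hI0)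
  set Λ : ℝ := lam n I f 3 with hΛdef
  set L : ℝ := Λ ^ ((1:ℝ)/3) with hLdef
  have hL0 : 0 ≤ L := Real.rpow_nonneg hΛ0 _
  have hB1n : 0 ≤ B1 := le_trans (abs_nonneg _) (hB1 0)
  have hB2n : 0 ≤ B2 := le_trans (abs_nonneg _) (hB2 0)
  have hB3n : 0 ≤ B3 := le_trans (abs_nonneg _) (hB3 0)
  set M : ℝ := (B1 + 3*B2 + B3) * Λ with hMdef
  have hM0 : 0 ≤ M := mul_nonneg (by linarith) hΛ0
  have hγ0 : 0 ≤ γ :=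
    le_trans (integral_nonneg fun ω => by positivity) (hγX ⟨0, hn⟩)
  have hg0 : Differentiable ℝ g := by
    have := hg 0 (by norm_num); rwa [iteratedDeriv_zero] at this
  have hcf : ContinuousOn f {v : Fin n → ℝ | ∀ j, v j ∈ I} :=
    f_contOn hIopen hIconn hf hbdd3 hΛ0
  -- hybrid vectors
  set S : ℕ → Ω → (Fin n → ℝ) := fun k ω i => if (i:ℕ) < k then X i ω else Y i ω
    with hSdef
  have hSmeas : ∀ k, Measurable (S k) := by
    intro k
    rw [measurable_pi_iff]
    intro i
    by_cases hik : (i:ℕ) < k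
    · simp only [hSdef, if_pos hik]; exact hXmeas i
    · simp only [hSdef, if_neg hik]; exact hYmeas i
  have hSI : ∀ k ω j, S k ω j ∈ I := by
    intro k ω j
    by_cases hik : (j:ℕ) < k
    · simp only [hSdef, if_pos hik]; exact hXI j ω
    · simp only [hSdef, if_neg hik]; exact hYI j ω
  -- coordinate integrability
  have hXint : ∀ i, Integrable (X i) μ := fun i =>
    memLp_one_iff_integrable.mp ((hX3 i).mono_exponent (by norm_num))
  have hYint : ∀ i, Integrable (Y i) μ := fun i =>
    memLp_one_iff_integrable.mp ((hY3 i).mono_exponent (by norm_num))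
  have hX3int : ∀ i, Integrable (fun ω => |X i ω| ^ 3) μ := by
    intro i
    have h := (hX3 i).integrable_norm_rpow (by norm_num) (by norm_num)
    refine h.congr (Filter.Eventually.of_forall fun ω => ?_)
    show ‖_‖ ^ ((3:ℝ≥0∞).toReal) = _
    rw [Real.norm_eq_abs, show ((3:ℝ≥0∞).toReal) = ((3:ℕ):ℝ) by norm_num,
      Real.rpow_natCast]
  have hY3int : ∀ i, Integrable (fun ω => |Y i ω| ^ 3) μ := by
    intro i
    have h := (hY3 i).integrable_norm_rpow (by norm_num) (by norm_num)
    refine h.congr (Filter.Eventually.of_forall fun ω => ?_)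
    show ‖_‖ ^ ((3:ℝ≥0∞).toReal) = _
    rw [Real.norm_eq_abs, show ((3:ℝ≥0∞).toReal) = ((3:ℕ):ℝ) by norm_num,
      Real.rpow_natCast]
  have hX2int : ∀ i, Integrable (fun ω => (X i ω) ^ 2) μ := by
    intro i
    refine Integrable.mono' ((integrable_const 1).add (hX3int i))
      ((hXmeas i).pow_const 2).aestronglyMeasurable
      (Filter.Eventually.of_forall fun ω => ?_)
    rw [Real.norm_eq_abs, abs_pow]
    simp only [Pi.add_apply]
    nlinarith [abs_nonneg (X i ω), sq_nonneg (|X i ω| - 1),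
      mul_nonneg (abs_nonneg (X i ω)) (sq_nonneg (|X i ω| - 1))]
  have hY2int : ∀ i, Integrable (fun ω => (Y i ω) ^ 2) μ := by
    intro i
    refine Integrable.mono' ((integrable_const 1).add (hY3int i))
      ((hYmeas i).pow_const 2).aestronglyMeasurable
      (Filter.Eventually.of_forall fun ω => ?_)
    rw [Real.norm_eq_abs, abs_pow]
    simp only [Pi.add_apply]
    nlinarith [abs_nonneg (Y i ω), sq_nonneg (|Y i ω| - 1),
      mul_nonneg (abs_nonneg (Y i ω)) (sq_nonneg (|Y i ω| - 1))]
  -- measurability / integrability of g ∘ f ∘ S k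
  have hJmeas : ∀ k, Measurable fun ω => g (f (S k ω)) := fun k =>
    hg0.continuous.measurable.comp (meas_comp hcf (hSmeas k) (hSI k))
  have glip : ∀ a b : ℝ, |g a - g b| ≤ B1 * |a - b| := by
    intro a b
    have := Convex.norm_image_sub_le_of_norm_deriv_le (f := g)
      (fun x _ => hg0 x) (fun x _ => by rw [Real.norm_eq_abs]; exact hB1 x)
      convex_univ (mem_univ b) (mem_univ a)
    simpa [Real.norm_eq_abs] using this
  have hSabsint : ∀ k j, Integrable (fun ω => |S k ω j|) μ := by
    intro k j
    by_cases hik : (j:ℕ) < k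
    · simp only [hSdef, if_pos hik]; exact (hXint j).abs
    · simp only [hSdef, if_neg hik]; exact (hYint j).abs
  have hJint : ∀ k, Integrable (fun ω => g (f (S k ω))) μ := by
    intro k
    refine Integrable.mono'
      ((integrable_const (|g (f (fun _ => 0))|)).add
        ((integrable_finset_sum Finset.univ fun j _ => hSabsint k j).const_mul (B1 * L)))
      (hJmeas k).aestronglyMeasurable (Filter.Eventually.of_forall fun ω => ?_)
    rw [Real.norm_eq_abs]
    have h1 : |g (f (S k ω)) - g (f (fun _ => 0))| ≤ B1 * |f (S k ω) - f (fun _ => 0)| :=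
      glip _ _
    have h2 : |f (S k ω) - f (fun _ => 0)| ≤ L * ∑ j, |S k ω j| := by
      have h := f_multiLip hIopen hIconn hf hbdd3 (hSI k ω) (fun _ => hI0)
      rw [hLdef]
      refine le_trans (le_of_eq ?_) (h.trans (le_of_eq ?_)) <;> [skip; skip]
      · rfl
      · congr 1
        refine Finset.sum_congr rfl fun j _ => ?_
        rw [sub_zero]
    have h3 : |g (f (S k ω))| - |g (f (fun _ => 0))| ≤ B1 * (L * ∑ j, |S k ω j|) :=
      le_trans (le_trans (abs_sub_abs_le_abs_sub _ _) h1)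
        (mul_le_mul_of_nonneg_left h2 hB1n)
    simp only [Pi.add_apply]
    have : B1 * (L * ∑ j, |S k ω j|) = B1 * L * ∑ j, |S k ω j| := by ring
    rw [this] at h3
    linarith
  -- endpoints
  have hXtop : ∀ ω, (fun i => X i ω) = S n ω := by
    intro ω; funext i; simp only [hSdef, if_pos i.isLt]
  have hY0 : ∀ ω, (fun i => Y i ω) = S 0 ω := by
    intro ω; funext i; simp only [hSdef]; rw [if_neg (by omega)]
  have hIX : (∫ ω, g (f fun i => X i ω) ∂μ) = ∫ ω, g (f (S n ω)) ∂μ := by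
    refine integral_congr_ae (Filter.Eventually.of_forall fun ω => ?_)
    simp only [hXtop ω]
  have hIY : (∫ ω, g (f fun i => Y i ω) ∂μ) = ∫ ω, g (f (S 0 ω)) ∂μ := by
    refine integral_congr_ae (Filter.Eventually.of_forall fun ω => ?_)
    simp only [hY0 ω]
  -- independence base
  have hind : iIndep (fun j => MeasurableSpace.comap (Sum.elim X Y j) inferInstance) μ :=
    hindep
  have hle : ∀ j, MeasurableSpace.comap (Sum.elim X Y j) inferInstance
      ≤ (inferInstance : MeasurableSpace Ω) := by
    intro j
    cases j with
    | inl i => exact (hXmeas i).comap_le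
    | inr i => exact (hYmeas i).comap_le
  -- the key one-step estimate
  have step : ∀ k, k < n →
      |(∫ ω, g (f (S (k+1) ω)) ∂μ) - ∫ ω, g (f (S k ω)) ∂μ| ≤ M * γ / 3 := by
    intro k hk
    set κ : Fin n := ⟨k, hk⟩ with hκdef
    set W : Ω → (Fin n → ℝ) := fun ω => Function.update (S k ω) κ 0 with hWdef
    have hWI : ∀ ω j, W ω j ∈ I := by
      intro ω j
      rcases eq_or_ne j κ with rfl | hj
      · simp only [hWdef, Function.update_self]; exact hI0
      · simp only [hWdef, Function.update_of_ne hj]; exact hSI k ω j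
    have hWmeas : Measurable W := by
      rw [measurable_pi_iff]
      intro j
      rcases eq_or_ne j κ with rfl | hj
      · simp only [hWdef, Function.update_self]; exact measurable_const
      · have : (fun ω => W ω j) = fun ω => S k ω j :=
          funext fun ω => by simp only [hWdef, Function.update_of_ne hj]
        rw [this]
        exact (measurable_pi_apply j).comp (hSmeas k)
    -- slice function facts
    have hcfω := fun ω : Ω => comp_facts hIopen hf hbdd3 hg hB1 hB2 hB3 (hWI ω) κ
    set H : Ω → ℝ → ℝ := fun ω s => g (f (Function.update (W ω) κ s)) with hHdef
    set bb : Ω → ℝ := fun ω => deriv (H ω) 0 with hbbdef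
    set cc : Ω → ℝ := fun ω => deriv (deriv (H ω)) 0 with hccdef
    have htaylor : ∀ ω, ∀ t ∈ I,
        |H ω t - H ω 0 - bb ω * t - cc ω * t^2/2| ≤ M * |t|^3/6 := by
      intro ω t ht
      obtain ⟨cD1, cD2, cD3, _, _, cb3⟩ := hcfω ω
      refine taylor3_bound hIopen hconv hI0 cD1 cD2 cD3 (fun u hu => ?_) ht
      rw [hMdef]
      exact cb3 u hu
    have hbbd : ∀ ω, |bb ω| ≤ B1 * L := fun ω => (hcfω ω).2.2.2.1 0 hI0
    have hcbd : ∀ ω, |cc ω| ≤ (B1 + B2) * Λ ^ ((2:ℝ)/3) := fun ω =>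
      (hcfω ω).2.2.2.2.1 0 hI0
    -- identification of the updates
    have hSX : ∀ ω, Function.update (W ω) κ (X κ ω) = S (k+1) ω := by
      intro ω
      funext j
      rcases eq_or_ne j κ with rfl | hj
      · simp only [Function.update_self, hSdef, hκdef]
        rw [if_pos (by omega)]
      · have hjk : (j:ℕ) ≠ k := fun hc => hj (Fin.ext (by rw [hc, hκdef]))
        simp only [hWdef, Function.update_of_ne hj, hSdef]
        have : ((j:ℕ) < k + 1) ↔ ((j:ℕ) < k) := by omega
        rw [if_congr this rfl rfl]
    have hSY : ∀ ω, Function.update (W ω) κ (Y κ ω) = S k ω := by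
      intro ω
      funext j
      rcases eq_or_ne j κ with rfl | hj
      · simp only [Function.update_self, hSdef, hκdef]
        rw [if_neg (by omega)]
      · simp only [hWdef, Function.update_of_ne hj]
    have hWW : ∀ ω, Function.update (W ω) κ 0 = W ω := by
      intro ω
      simp only [hWdef, Function.update_idem]
    -- remainders
    set RX : Ω → ℝ := fun ω =>
      g (f (S (k+1) ω)) - H ω 0 - bb ω * X κ ω - cc ω * (X κ ω)^2/2 with hRXdef
    set RY : Ω → ℝ := fun ω =>
      g (f (S k ω)) - H ω 0 - bb ω * Y κ ω - cc ω * (Y κ ω)^2/2 with hRYdef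
    have hRXb : ∀ ω, |RX ω| ≤ M * |X κ ω|^3/6 := by
      intro ω
      have h1 := htaylor ω (X κ ω) (hXI κ ω)
      have h2 : H ω (X κ ω) = g (f (S (k+1) ω)) := by
        simp only [hHdef]; rw [hSX ω]
      rw [h2] at h1
      exact h1
    have hRYb : ∀ ω, |RY ω| ≤ M * |Y κ ω|^3/6 := by
      intro ω
      have h1 := htaylor ω (Y κ ω) (hYI κ ω)
      have h2 : H ω (Y κ ω) = g (f (S k ω)) := by
        simp only [hHdef]; rw [hSY ω]
      rw [h2] at h1
      exact h1
    -- measurability of bb, cc with respect to a given σ-algebra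
    have hbcc : ∀ (m0 : MeasurableSpace Ω), Measurable[m0] W →
        Measurable[m0] bb ∧ Measurable[m0] cc := by
      intro m0 hW
      have hupd : ∀ u : ℝ, u ∈ I → Measurable[m0] (fun ω => Function.update (W ω) κ u)
          ∧ ∀ ω j, Function.update (W ω) κ u j ∈ I := by
        intro u hu
        constructor
        · rw [measurable_pi_iff]
          intro j
          rcases eq_or_ne j κ with rfl | hj
          · simp only [Function.update_self]; exact measurable_const
          · have : (fun ω => Function.update (W ω) κ u j) = fun ω => W ω j :=
              funext fun ω => Function.update_of_ne hj _ _
            rw [this]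
            exact (measurable_pi_apply j).comp hW
        · intro ω j
          rcases eq_or_ne j κ with rfl | hj
          · simpa only [Function.update_self] using hu
          · simp only [Function.update_of_ne hj]; exact hWI ω j
      have hHmeas : ∀ u ∈ I, Measurable[m0] fun ω => H ω u := by
        intro u hu
        exact hg0.continuous.measurable.comp
          (meas_comp hcf (hupd u hu).1 (hupd u hu).2)
      have hbm : Measurable[m0] bb :=
        meas_deriv hIopen hI0 hHmeas (fun ω =>
          (hcfω ω).1.differentiableAt (hIopen.mem_nhds hI0))
      have hdm : ∀ u ∈ I, Measurable[m0] fun ω => deriv (H ω) u := by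
        intro u hu
        exact meas_deriv hIopen hu hHmeas (fun ω =>
          (hcfω ω).1.differentiableAt (hIopen.mem_nhds hu))
      have hcm : Measurable[m0] cc :=
        meas_deriv hIopen hI0 hdm (fun ω =>
          (hcfω ω).2.1.differentiableAt (hIopen.mem_nhds hI0))
      exact ⟨hbm, hcm⟩
    obtain ⟨hbbMeas, hccMeas⟩ := hbcc _ hWmeas
    -- integrability of the pieces
    have hbX : Integrable (fun ω => bb ω * X κ ω) μ :=
      (hXint κ).bdd_mul hbbMeas.aestronglyMeasurable
        (Filter.Eventually.of_forall fun ω => by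
          rw [Real.norm_eq_abs]; exact hbbd ω)
    have hbY : Integrable (fun ω => bb ω * Y κ ω) μ :=
      (hYint κ).bdd_mul hbbMeas.aestronglyMeasurable
        (Filter.Eventually.of_forall fun ω => by
          rw [Real.norm_eq_abs]; exact hbbd ω)
    have hcX : Integrable (fun ω => cc ω * (X κ ω)^2 / 2) μ :=
      ((hX2int κ).bdd_mul hccMeas.aestronglyMeasurable
        (Filter.Eventually.of_forall fun ω => by
          rw [Real.norm_eq_abs]; exact hcbd ω)).div_const 2
    have hcY : Integrable (fun ω => cc ω * (Y κ ω)^2 / 2) μ :=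
      ((hY2int κ).bdd_mul hccMeas.aestronglyMeasurable
        (Filter.Eventually.of_forall fun ω => by
          rw [Real.norm_eq_abs]; exact hcbd ω)).div_const 2
    have haMeas : Measurable (fun ω => H ω 0) := by
      have : (fun ω => H ω 0) = fun ω => g (f (W ω)) := by
        funext ω
        simp only [hHdef]
        rw [hWW ω]
      rw [this]
      exact hg0.continuous.measurable.comp (meas_comp hcf hWmeas (fun ω j => hWI ω j))
    have hRXmeas : Measurable RX := by
      apply Measurable.sub
      apply Measurable.sub
      apply Measurable.sub
      · exact hJmeas (k+1)
      · exact haMeas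
      · exact hbbMeas.mul (hXmeas κ)
      · exact (hccMeas.mul ((hXmeas κ).pow_const 2)).div_const 2
    have hRYmeas : Measurable RY := by
      apply Measurable.sub
      apply Measurable.sub
      apply Measurable.sub
      · exact hJmeas k
      · exact haMeas
      · exact hbbMeas.mul (hYmeas κ)
      · exact (hccMeas.mul ((hYmeas κ).pow_const 2)).div_const 2
    have hRXint : Integrable RX μ := by
      refine Integrable.mono' ((hX3int κ).const_mul (M/6))
        hRXmeas.aestronglyMeasurable (Filter.Eventually.of_forall fun ω => ?_)
      rw [Real.norm_eq_abs]
      calc |RX ω| ≤ M * |X κ ω|^3/6 := hRXb ω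
        _ = M/6 * |X κ ω|^3 := by ring
    have hRYint : Integrable RY μ := by
      refine Integrable.mono' ((hY3int κ).const_mul (M/6))
        hRYmeas.aestronglyMeasurable (Filter.Eventually.of_forall fun ω => ?_)
      rw [Real.norm_eq_abs]
      calc |RY ω| ≤ M * |Y κ ω|^3/6 := hRYb ω
        _ = M/6 * |Y κ ω|^3 := by ring
    -- independence
    set T : Set (Fin n ⊕ Fin n) :=
      Sum.inl '' {i : Fin n | (i:ℕ) < k} ∪ Sum.inr '' {i : Fin n | k < (i:ℕ)} with hTdef
    have hWmT : Measurable[(⨆ j ∈ T, MeasurableSpace.comap (Sum.elim X Y j) inferInstance)] W := by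
      letI m' : MeasurableSpace Ω :=
        ⨆ j ∈ T, MeasurableSpace.comap (Sum.elim X Y j) inferInstance
      show Measurable[m'] W
      refine measurable_pi_iff.mpr fun j => ?_
      rcases eq_or_ne j κ with rfl | hj
      · simp only [hWdef, Function.update_self]; exact measurable_const
      · have hje : (fun ω => W ω j) = fun ω => S k ω j :=
          funext fun ω => by simp only [hWdef, Function.update_of_ne hj]
        rw [hje]
        have hjk : (j:ℕ) ≠ k := fun hc => hj (Fin.ext (by rw [hc, hκdef]))
        by_cases hlt : (j:ℕ) < k
        · have hmem : (Sum.inl j : Fin n ⊕ Fin n) ∈ T := Or.inl ⟨j, hlt, rfl⟩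
          have hle' : MeasurableSpace.comap (Sum.elim X Y (Sum.inl j)) inferInstance
              ≤ (⨆ j ∈ T, MeasurableSpace.comap (Sum.elim X Y j) inferInstance) :=
            le_biSup (fun j => MeasurableSpace.comap (Sum.elim X Y j) inferInstance) hmem
          have : (fun ω => S k ω j) = X j := funext fun ω => by
            simp only [hSdef]; rw [if_pos hlt]
          rw [this]
          exact Measurable.mono (measurable_iff_comap_le.mpr le_rfl) hle' le_rfl
        · have hgt : k < (j:ℕ) := by omega
          have hmem : (Sum.inr j : Fin n ⊕ Fin n) ∈ T := Or.inr ⟨j, hgt, rfl⟩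
          have hle' : MeasurableSpace.comap (Sum.elim X Y (Sum.inr j)) inferInstance
              ≤ (⨆ j ∈ T, MeasurableSpace.comap (Sum.elim X Y j) inferInstance) :=
            le_biSup (fun j => MeasurableSpace.comap (Sum.elim X Y j) inferInstance) hmem
          have : (fun ω => S k ω j) = Y j := funext fun ω => by
            simp only [hSdef]; rw [if_neg hlt]
          rw [this]
          exact Measurable.mono (measurable_iff_comap_le.mpr le_rfl) hle' le_rfl
    obtain ⟨hbbMT, hccMT⟩ := hbcc (⨆ j ∈ T, MeasurableSpace.comap (Sum.elim X Y j) inferInstance) hWmT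
    have hdisjX : Disjoint ({Sum.inl κ} : Set (Fin n ⊕ Fin n)) T := by
      rw [Set.disjoint_left]
      rintro j rfl
      rintro (⟨i, hi, hie⟩ | ⟨i, hi, hie⟩)
      · have hik : i = κ := Sum.inl.inj hie
        rw [hik] at hi
        simp only [Set.mem_setOf_eq, hκdef] at hi
        omega
      · exact Sum.inr_ne_inl hie
    have hdisjY : Disjoint ({Sum.inr κ} : Set (Fin n ⊕ Fin n)) T := by
      rw [Set.disjoint_left]
      rintro j rfl
      rintro (⟨i, hi, hie⟩ | ⟨i, hi, hie⟩)
      · exact Sum.inl_ne_inr hie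
      · have : i = κ := Sum.inr.inj hie
        rw [this] at hi
        simp only [Set.mem_setOf_eq, hκdef] at hi
        omega
    have hIndX : Indep (MeasurableSpace.comap (X κ) inferInstance) (⨆ j ∈ T, MeasurableSpace.comap (Sum.elim X Y j) inferInstance) μ := by
      have h := indep_iSup_of_disjoint hle hind hdisjX
      have hsing : (⨆ j ∈ ({Sum.inl κ} : Set (Fin n ⊕ Fin n)),
          MeasurableSpace.comap (Sum.elim X Y j) inferInstance)
          = MeasurableSpace.comap (X κ) inferInstance := by
        simp
      rwa [hsing] at h
    have hIndY : Indep (MeasurableSpace.comap (Y κ) inferInstance) (⨆ j ∈ T, MeasurableSpace.comap (Sum.elim X Y j) inferInstance) μ := by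
      have h := indep_iSup_of_disjoint hle hind hdisjY
      have hsing : (⨆ j ∈ ({Sum.inr κ} : Set (Fin n ⊕ Fin n)),
          MeasurableSpace.comap (Sum.elim X Y j) inferInstance)
          = MeasurableSpace.comap (Y κ) inferInstance := by
        simp
      rwa [hsing] at h
    have hsq : ∀ Z : Ω → ℝ, MeasurableSpace.comap (fun ω => (Z ω)^2) inferInstance
        ≤ MeasurableSpace.comap Z inferInstance := by
      intro Z
      have hZ : @Measurable Ω ℝ (MeasurableSpace.comap Z inferInstance) _ Z :=
        fun t ht => ⟨t, ht, rfl⟩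
      exact Measurable.comap_le (hZ.pow_const 2)
    have hIFbX : IndepFun bb (X κ) μ := by
      rw [IndepFun_iff_Indep]
      exact (indep_of_indep_of_le_right hIndX hbbMT.comap_le).symm
    have hIFbY : IndepFun bb (Y κ) μ := by
      rw [IndepFun_iff_Indep]
      exact (indep_of_indep_of_le_right hIndY hbbMT.comap_le).symm
    have hIFcX : IndepFun cc (fun ω => (X κ ω)^2) μ := by
      rw [IndepFun_iff_Indep]
      exact (indep_of_indep_of_le_right
        (indep_of_indep_of_le_left hIndX (hsq (X κ))) hccMT.comap_le).symm
    have hIFcY : IndepFun cc (fun ω => (Y κ ω)^2) μ := by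
      rw [IndepFun_iff_Indep]
      exact (indep_of_indep_of_le_right
        (indep_of_indep_of_le_left hIndY (hsq (Y κ))) hccMT.comap_le).symm
    -- expectation computations
    have hEbX : ∫ ω, bb ω * X κ ω ∂μ = (∫ ω, bb ω ∂μ) * ∫ ω, X κ ω ∂μ := by
      have h := hIFbX.integral_mul_eq_mul_integral hbbMeas.aestronglyMeasurable
        (hXmeas κ).aestronglyMeasurable
      simpa [Pi.mul_apply] using h
    have hEbY : ∫ ω, bb ω * Y κ ω ∂μ = (∫ ω, bb ω ∂μ) * ∫ ω, Y κ ω ∂μ := by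
      have h := hIFbY.integral_mul_eq_mul_integral hbbMeas.aestronglyMeasurable
        (hYmeas κ).aestronglyMeasurable
      simpa [Pi.mul_apply] using h
    have hEcX : ∫ ω, cc ω * (X κ ω)^2 ∂μ = (∫ ω, cc ω ∂μ) * ∫ ω, (X κ ω)^2 ∂μ := by
      have h := hIFcX.integral_mul_eq_mul_integral hccMeas.aestronglyMeasurable
        ((hXmeas κ).pow_const 2).aestronglyMeasurable
      simpa [Pi.mul_apply] using h
    have hEcY : ∫ ω, cc ω * (Y κ ω)^2 ∂μ = (∫ ω, cc ω ∂μ) * ∫ ω, (Y κ ω)^2 ∂μ := by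
      have h := hIFcY.integral_mul_eq_mul_integral hccMeas.aestronglyMeasurable
        ((hYmeas κ).pow_const 2).aestronglyMeasurable
      simpa [Pi.mul_apply] using h
    -- the pointwise decomposition
    have hdecomp : ∀ ω, g (f (S (k+1) ω)) - g (f (S k ω))
        = (bb ω * X κ ω - bb ω * Y κ ω)
          + (cc ω * (X κ ω)^2/2 - cc ω * (Y κ ω)^2/2) + (RX ω - RY ω) := by
      intro ω
      simp only [hRXdef, hRYdef]
      ring
    have hIdiff : (∫ ω, g (f (S (k+1) ω)) ∂μ) - ∫ ω, g (f (S k ω)) ∂μ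
        = (∫ ω, RX ω ∂μ) - ∫ ω, RY ω ∂μ := by
      have e1 : (∫ ω, g (f (S (k+1) ω)) ∂μ) - ∫ ω, g (f (S k ω)) ∂μ
          = ∫ ω, (g (f (S (k+1) ω)) - g (f (S k ω))) ∂μ :=
        (integral_sub (hJint (k+1)) (hJint k)).symm
      rw [e1]
      have e2 : ∫ ω, (g (f (S (k+1) ω)) - g (f (S k ω))) ∂μ
          = ∫ ω, ((bb ω * X κ ω - bb ω * Y κ ω)
            + (cc ω * (X κ ω)^2/2 - cc ω * (Y κ ω)^2/2) + (RX ω - RY ω)) ∂μ :=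
        integral_congr_ae (Filter.Eventually.of_forall fun ω => hdecomp ω)
      rw [e2]
      have i1 : Integrable (fun ω => bb ω * X κ ω - bb ω * Y κ ω) μ := hbX.sub hbY
      have i2 : Integrable (fun ω => cc ω * (X κ ω)^2/2 - cc ω * (Y κ ω)^2/2) μ :=
        hcX.sub hcY
      have i12 : Integrable (fun ω => (bb ω * X κ ω - bb ω * Y κ ω)
          + (cc ω * (X κ ω)^2/2 - cc ω * (Y κ ω)^2/2)) μ := i1.add i2
      have iR : Integrable (fun ω => RX ω - RY ω) μ := hRXint.sub hRYint
      rw [integral_add i12 iR, integral_add i1 i2,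
        integral_sub hbX hbY, integral_sub hcX hcY, integral_sub hRXint hRYint]
      have ecX : ∫ ω, cc ω * (X κ ω)^2 / 2 ∂μ
          = (∫ ω, cc ω * (X κ ω)^2 ∂μ) / 2 := integral_div 2 _
      have ecY : ∫ ω, cc ω * (Y κ ω)^2 / 2 ∂μ
          = (∫ ω, cc ω * (Y κ ω)^2 ∂μ) / 2 := integral_div 2 _
      rw [ecX, ecY, hEbX, hEbY, hEcX, hEcY, hmean κ, hvar κ]
      ring
    rw [hIdiff]
    -- final bound
    have hintRX : |∫ ω, RX ω ∂μ| ≤ M * γ / 6 := by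
      calc |∫ ω, RX ω ∂μ| ≤ ∫ ω, |RX ω| ∂μ := by
            rw [show |∫ ω, RX ω ∂μ| = ‖∫ ω, RX ω ∂μ‖ from (Real.norm_eq_abs _).symm]
            refine le_trans (norm_integral_le_integral_norm _) (le_of_eq ?_)
            simp [Real.norm_eq_abs]
        _ ≤ ∫ ω, M/6 * |X κ ω|^3 ∂μ := by
            refine integral_mono hRXint.abs ((hX3int κ).const_mul (M/6)) fun ω => ?_
            calc |RX ω| ≤ M * |X κ ω|^3/6 := hRXb ω
              _ = M/6 * |X κ ω|^3 := by ring
        _ = M/6 * ∫ ω, |X κ ω|^3 ∂μ := integral_const_mul _ _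
        _ ≤ M/6 * γ := mul_le_mul_of_nonneg_left (hγX κ) (by linarith)
        _ = M * γ / 6 := by ring
    have hintRY : |∫ ω, RY ω ∂μ| ≤ M * γ / 6 := by
      calc |∫ ω, RY ω ∂μ| ≤ ∫ ω, |RY ω| ∂μ := by
            rw [show |∫ ω, RY ω ∂μ| = ‖∫ ω, RY ω ∂μ‖ from (Real.norm_eq_abs _).symm]
            refine le_trans (norm_integral_le_integral_norm _) (le_of_eq ?_)
            simp [Real.norm_eq_abs]
        _ ≤ ∫ ω, M/6 * |Y κ ω|^3 ∂μ := by
            refine integral_mono hRYint.abs ((hY3int κ).const_mul (M/6)) fun ω => ?_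
            calc |RY ω| ≤ M * |Y κ ω|^3/6 := hRYb ω
              _ = M/6 * |Y κ ω|^3 := by ring
        _ = M/6 * ∫ ω, |Y κ ω|^3 ∂μ := integral_const_mul _ _
        _ ≤ M/6 * γ := mul_le_mul_of_nonneg_left (hγY κ) (by linarith)
        _ = M * γ / 6 := by ring
    calc |(∫ ω, RX ω ∂μ) - ∫ ω, RY ω ∂μ|
        ≤ |∫ ω, RX ω ∂μ| + |∫ ω, RY ω ∂μ| := abs_sub _ _
      _ ≤ M * γ / 6 + M * γ / 6 := add_le_add hintRX hintRY
      _ = M * γ / 3 := by ring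
  -- telescoping
  have tele : (∫ ω, g (f (S n ω)) ∂μ) - ∫ ω, g (f (S 0 ω)) ∂μ
      = ∑ m ∈ Finset.range n,
        ((∫ ω, g (f (S (m+1) ω)) ∂μ) - ∫ ω, g (f (S m ω)) ∂μ) := by
    rw [Finset.sum_range_sub (fun m => ∫ ω, g (f (S m ω)) ∂μ)]
  rw [hIX, hIY, tele]
  calc |∑ m ∈ Finset.range n,
        ((∫ ω, g (f (S (m+1) ω)) ∂μ) - ∫ ω, g (f (S m ω)) ∂μ)|
      ≤ ∑ m ∈ Finset.range n,
        |(∫ ω, g (f (S (m+1) ω)) ∂μ) - ∫ ω, g (f (S m ω)) ∂μ| :=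
      Finset.abs_sum_le_sum_abs _ _
    _ ≤ ∑ _m ∈ Finset.range n, (M * γ / 3) :=
      Finset.sum_le_sum fun m hm => step m (Finset.mem_range.mp hm)
    _ = n * (M * γ / 3) := by
      rw [Finset.sum_const, Finset.card_range, nsmul_eq_mul]
    _ = 2 * (B1 / 6 + B2 / 2 + B3 / 6) * γ * n * Λ := by
      rw [hMdef]; ring
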